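/- Let K = (X, (→_a)_{a∈Σ}, ρ) be a Kripke structure over Σ with atomic proposition t₀, and suppose some world x ∈ X satisfies both φ_snake and φ_recur. Then K contains a snake σ on which infinitely many first-column worlds satisfy t₀; that is, there is a snake σ: ℕ → X such that the set of positions p ∈ ℕ with t₀ ∈ ρ(σ(p)) and σ(p) a first-column world of σ is infinite. -/

import Mathlib

/-- The six-letter alphabet `Σ = {a₁, a₂, b₁, b₂, c, d}`. -/
inductive Letter where
  | a1 | a2 | b1 | b2 | c | d
deriving DecidableEq

instance instFintypeLetter : Fintype Letter :=
  ⟨{.a1, .a2, .b1, .b2, .c, .d}, fun x => by cases x <;> simp⟩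

/-- `w^i`: the `i`-fold concatenation of the word `w`. -/
def wpow (w : List Letter) (i : ℕ) : List Letter :=
  (List.replicate i w).flatten

/-- Given a Kripke structure with transition relations `R a` for each letter `a`, the
relation `[[w]]` of a word `w`: the relational composition of the `R a` along `w`
(the identity for the empty word). -/
def wordRel {X : Type} (R : Letter → X → X → Prop) : List Letter → X → X → Prop
  | [] => fun x y => x = y
  | a :: w => fun x z => ∃ y, R a x y ∧ wordRel R w y z

/-- `L₀ = {(a₁b₂)^i d (a₂b₁)^j c : i, j ≥ 0, j ≠ i+1}`. -/
def L0 : Set (List Letter) :=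
  {w | ∃ i j : ℕ, j ≠ i + 1 ∧
    w = wpow [.a1, .b2] i ++ [.d] ++ wpow [.a2, .b1] j ++ [.c]}

/-- `L₁ = {(a₂b₁)^i c (a₁b₂)^j d : i, j ≥ 0, j ≠ i+1}`. -/
def L1 : Set (List Letter) :=
  {w | ∃ i j : ℕ, j ≠ i + 1 ∧
    w = wpow [.a2, .b1] i ++ [.c] ++ wpow [.a1, .b2] j ++ [.d]}

/-- The `r`-th block `c (a₁b₂)^{2r+1} d (a₂b₁)^{2r+2}` of the snake word. -/
def snakeBlock (r : ℕ) : List Letter :=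
  [.c] ++ wpow [.a1, .b2] (2 * r + 1) ++ [.d] ++ wpow [.a2, .b1] (2 * r + 2)

/-- The `(p+1)`-st letter of the infinite snake word
`W = c (a₁b₂)^1 d (a₂b₁)^2 c (a₁b₂)^3 d (a₂b₁)^4 c ⋯`
(the concatenation of the first `p+1` blocks has length `> p`, so the `getD` default
is never used). -/
def snakeWord (p : ℕ) : Letter :=
  (((List.range (p + 1)).map snakeBlock).flatten).getD p .c

/-- A snake in a Kripke structure: an infinite path labeled by the snake word `W`. -/
def IsSnake {X : Type} (R : Letter → X → X → Prop) (σ : ℕ → X) : Prop :=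
  ∀ p : ℕ, R (snakeWord p) (σ p) (σ (p + 1))

/-- `(K, x) ⊨ φ_snake`:
(i) `⟨c a₁ b₂ d (a₂b₁)² c⟩ true`;
(ii) `[Σ* c](⟨(a₁b₂)* d⟩ true ∧ [L₀] false)`;
(iii) `[Σ* d](⟨(a₂b₁)* c⟩ true ∧ [L₁] false)`. -/
def PhiSnake {X : Type} (R : Letter → X → X → Prop) (x : X) : Prop :=
  (∃ y, wordRel R [.c, .a1, .b2, .d, .a2, .b1, .a2, .b1, .c] x y) ∧
  (∀ y, (∃ u : List Letter, wordRel R (u ++ [.c]) x y) →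
    (∃ i : ℕ, ∃ z, wordRel R (wpow [.a1, .b2] i ++ [.d]) y z) ∧
    ¬ ∃ z, ∃ w ∈ L0, wordRel R w y z) ∧
  (∀ y, (∃ u : List Letter, wordRel R (u ++ [.d]) x y) →
    (∃ i : ℕ, ∃ z, wordRel R (wpow [.a2, .b1] i ++ [.c]) y z) ∧
    ¬ ∃ z, ∃ w ∈ L1, wordRel R w y z)


/-- Letters of `Σ` extended with the test `t₀?`. -/
inductive Tok where
  | letter (a : Letter)
  | test
deriving DecidableEq

/-- The relation `[[w]]` of a word `w` over `Σ` extended with the test `t₀?`, where the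
test holds at the worlds in `T`: `[[a]] = →_a`, `[[t₀?]] = {(x,x) : T x}`, composed. -/
def tokRel {X : Type} (R : Letter → X → X → Prop) (T : X → Prop) :
    List Tok → X → X → Prop
  | [] => fun x y => x = y
  | .letter a :: w => fun x z => ∃ y, R a x y ∧ tokRel R T w y z
  | .test :: w => fun x z => T x ∧ tokRel R T w x z

/-- Kleene star of a language: all concatenations of finitely many words of `L`. -/
def star {α : Type} (L : Set (List α)) : Set (List α) :=
  {w | ∃ ws : List (List α), (∀ u ∈ ws, u ∈ L) ∧ ws.flatten = w}

/-- `π↕`: the language of the regular expression `(a₁b₂)* d (a₂b₁)* c` over `Σ`. -/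
def piNS : Set (List Letter) :=
  {w | ∃ i j : ℕ, w = wpow [.a1, .b2] i ++ [.d] ++ wpow [.a2, .b1] j ++ [.c]}

/-- `β`: the language of the regular expression
`π↕* ( a₁ b₂ t₀? π↕ ∪ (a₁b₂)* d (a₂b₁)* t₀? c )` over `Σ` extended with the test `t₀?`. -/
def beta : Set (List Tok) :=
  {w | ∃ s v : List Tok,
    (∃ s' ∈ star piNS, s = s'.map Tok.letter) ∧
    ((∃ p ∈ piNS, v = [Tok.letter .a1, Tok.letter .b2, Tok.test] ++ p.map Tok.letter) ∨
     (∃ i j : ℕ, v = (wpow [.a1, .b2] i).map Tok.letter ++ [Tok.letter .d] ++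
        (wpow [.a2, .b1] j).map Tok.letter ++ [Tok.test, Tok.letter .c])) ∧
    w = s ++ v}

/-- `(K, x) ⊨ φ_recur`: for every `y` with `(x, y) ∈ [[Σ* c]]` there is `z` with
`(y, z) ∈ [[β]]`, where the test `t₀?` holds at worlds whose valuation contains `t₀`. -/
def PhiRecur {X : Type} (R : Letter → X → X → Prop)
    {P : Type} (ρ : X → Set P) (t0 : P) (x : X) : Prop :=
  ∀ y, (∃ u : List Letter, wordRel R (u ++ [.c]) x y) →
    ∃ z, ∃ w ∈ beta, tokRel R (fun v => t0 ∈ ρ v) w y z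

/-- Position `p` of a snake is a first-column position: either `W(p) = c`, or `p ≥ 3`
and `W(p−3) W(p−2) W(p−1) = c a₁ b₂`. -/
def FirstCol (p : ℕ) : Prop :=
  snakeWord p = .c ∨
  (3 ≤ p ∧ snakeWord (p - 3) = .c ∧ snakeWord (p - 2) = .a1 ∧ snakeWord (p - 1) = .b2)


namespace SnakeAux

/-! ### Basic word relation lemmas -/

theorem wordRel_append {X : Type} {R : Letter → X → X → Prop} :
    ∀ (u v : List Letter) (x z : X),
    wordRel R (u ++ v) x z ↔ ∃ y, wordRel R u x y ∧ wordRel R v y z := by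
  intro u
  induction u with
  | nil =>
    intro v x z
    constructor
    · intro h; exact ⟨x, rfl, h⟩
    · rintro ⟨y, rfl, h⟩; exact h
  | cons a u ih =>
    intro v x z
    constructor
    · rintro ⟨y, hy, h⟩
      obtain ⟨m, h1, h2⟩ := (ih v y z).1 h
      exact ⟨m, ⟨y, hy, h1⟩, h2⟩
    · rintro ⟨m, ⟨y, hy, h1⟩, h2⟩
      exact ⟨y, hy, (ih v y z).2 ⟨m, h1, h2⟩⟩

theorem wordRel_single {X : Type} {R : Letter → X → X → Prop} {a : Letter} {x z : X} :
    wordRel R [a] x z ↔ R a x z := by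
  constructor
  · rintro ⟨y, hy, rfl⟩; exact hy
  · intro h; exact ⟨z, h, rfl⟩

theorem wpow_zero (w : List Letter) : wpow w 0 = [] := rfl

theorem wpow_succ (w : List Letter) (i : ℕ) : wpow w (i + 1) = w ++ wpow w i := by
  simp [wpow, List.replicate_succ]

theorem wpow_length (w : List Letter) (i : ℕ) : (wpow w i).length = i * w.length := by
  induction i with
  | zero => simp [wpow]
  | succ i ih => rw [wpow_succ]; simp [ih]; ring

theorem tokRel_append {X : Type} {R : Letter → X → X → Prop} {T : X → Prop} :
    ∀ (u v : List Tok) (x z : X),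
    tokRel R T (u ++ v) x z ↔ ∃ y, tokRel R T u x y ∧ tokRel R T v y z := by
  intro u
  induction u with
  | nil =>
    intro v x z
    constructor
    · intro h; exact ⟨x, rfl, h⟩
    · rintro ⟨y, rfl, h⟩; exact h
  | cons a u ih =>
    intro v x z
    cases a with
    | letter a =>
      constructor
      · rintro ⟨y, hy, h⟩
        obtain ⟨m, h1, h2⟩ := (ih v y z).1 h
        exact ⟨m, ⟨y, hy, h1⟩, h2⟩
      · rintro ⟨m, ⟨y, hy, h1⟩, h2⟩
        exact ⟨y, hy, (ih v y z).2 ⟨m, h1, h2⟩⟩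
    | test =>
      constructor
      · rintro ⟨hT, h⟩
        obtain ⟨m, h1, h2⟩ := (ih v x z).1 h
        exact ⟨m, ⟨hT, h1⟩, h2⟩
      · rintro ⟨m, ⟨hT, h1⟩, h2⟩
        exact ⟨hT, (ih v x z).2 ⟨m, h1, h2⟩⟩

theorem tokRel_map {X : Type} {R : Letter → X → X → Prop} {T : X → Prop} :
    ∀ (w : List Letter) (x z : X),
    tokRel R T (w.map Tok.letter) x z ↔ wordRel R w x z := by
  intro w
  induction w with
  | nil => intro x z; exact Iff.rfl
  | cons a w ih =>
    intro x z
    constructor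
    · rintro ⟨y, hy, h⟩; exact ⟨y, hy, (ih y z).1 h⟩
    · rintro ⟨y, hy, h⟩; exact ⟨y, hy, (ih y z).2 h⟩

/-- Extract a path function from a word relation. -/
theorem wordRel_path {X : Type} {R : Letter → X → X → Prop} :
    ∀ (w : List Letter) (y z : X), wordRel R w y z →
    ∃ f : ℕ → X, f 0 = y ∧ f w.length = z ∧
      ∀ p < w.length, R (w.getD p .c) (f p) (f (p + 1)) := by
  intro w
  induction w with
  | nil => intro y z h; exact ⟨fun _ => y, rfl, h ▸ rfl, by simp⟩
  | cons a w ih =>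
    rintro y z ⟨y1, hy1, h⟩
    obtain ⟨f, hf0, hfl, hf⟩ := ih y1 z h
    refine ⟨fun p => if p = 0 then y else f (p - 1), rfl, by simp [hfl], ?_⟩
    intro p hp
    match p with
    | 0 => simpa [hf0] using hy1
    | q + 1 => simpa using hf q (by simpa using hp)

end SnakeAux

namespace SnakeAux

/-! ### Snake word combinatorics -/

/-- Starting position of block `r`. -/
def B (r : ℕ) : ℕ := 4 * r * (r + 1)

theorem B_succ (r : ℕ) : B (r + 1) = B r + (8 * r + 8) := by unfold B; ring

theorem B_ge (r : ℕ) : r ≤ B r := by unfold B; nlinarith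

theorem B_mono : Monotone B := by
  intro a b h
  unfold B
  have : a * (a+1) ≤ b * (b+1) := Nat.mul_le_mul h (by omega)
  nlinarith

def frange (N : ℕ) : List Letter := ((List.range N).map snakeBlock).flatten

theorem snakeBlock_length (r : ℕ) : (snakeBlock r).length = 8 * r + 8 := by
  simp [snakeBlock, wpow_length]; ring

theorem frange_succ (N : ℕ) : frange (N + 1) = frange N ++ snakeBlock N := by
  simp [frange, List.range_succ]

theorem frange_length (N : ℕ) : (frange N).length = B N := by
  induction N with
  | zero => rfl
  | succ N ih => rw [frange_succ, B_succ]; simp [ih, snakeBlock_length]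

theorem frange_prefix {N M : ℕ} (h : N ≤ M) : ∃ t, frange M = frange N ++ t := by
  induction M with
  | zero =>
    have : N = 0 := Nat.le_zero.1 h
    subst this
    exact ⟨[], by simp⟩
  | succ M ih =>
    rcases Nat.lt_or_ge N (M+1) with h' | h'
    · obtain ⟨t, ht⟩ := ih (by omega)
      exact ⟨t ++ snakeBlock M, by rw [frange_succ, ht, List.append_assoc]⟩
    · have : N = M + 1 := by omega
      exact ⟨[], by simp [this]⟩

theorem snakeWord_eq {N p : ℕ} (h : p < B N) : snakeWord p = (frange N).getD p .c := by
  have hdef : snakeWord p = (frange (p+1)).getD p .c := rfl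
  rcases Nat.le_total N (p+1) with h' | h'
  · obtain ⟨t, ht⟩ := frange_prefix h'
    rw [hdef, ht, List.getD_append _ _ _ _ (by rw [frange_length]; exact h)]
  · obtain ⟨t, ht⟩ := frange_prefix h'
    rw [hdef] at *
    rw [ht, List.getD_append _ _ _ _ (by rw [frange_length, B]; nlinarith)]

theorem W_in_block {r q : ℕ} (hq : q < 8 * r + 8) :
    snakeWord (B r + q) = (snakeBlock r).getD q .c := by
  rw [snakeWord_eq (N := r + 1) (by rw [B_succ]; omega), frange_succ,
    List.getD_append_right _ _ _ _ (by rw [frange_length]; omega)]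
  simp [frange_length]

/-- The letters of `W` at positions `a, a+1, …, a+n-1`. -/
def Wlist (a n : ℕ) : List Letter := (List.range n).map fun t => snakeWord (a + t)

theorem Wlist_length (a n : ℕ) : (Wlist a n).length = n := by simp [Wlist]

theorem Wlist_append (a m n : ℕ) : Wlist a (m + n) = Wlist a m ++ Wlist (a + m) n := by
  simp only [Wlist, List.range_add, List.map_append, List.map_map]
  congr 1
  apply List.map_congr_left
  intro t _
  simp [Function.comp]
  ring_nf

theorem Wlist_getD {a n p : ℕ} (hp : p < n) (dflt : Letter) :
    (Wlist a n).getD p dflt = snakeWord (a + p) := by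
  rw [List.getD_eq_getElem _ _ (by simpa [Wlist_length])]
  simp [Wlist]

theorem blockList (r : ℕ) : Wlist (B r) (8 * r + 8) = snakeBlock r := by
  apply List.ext_getElem (by simp [Wlist_length, snakeBlock_length])
  intro q h1 h2
  have hq : q < 8 * r + 8 := by simpa [Wlist_length] using h1
  have := W_in_block (r := r) hq
  rw [List.getD_eq_getElem _ _ (by simpa [snakeBlock_length])] at this
  rw [← this]
  simp [Wlist]

/-- The word of the `r`-th π↕-segment: `(a₁b₂)^{2r+1} d (a₂b₁)^{2r+2} c`. -/
def seg (r : ℕ) : List Letter :=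
  wpow [.a1, .b2] (2 * r + 1) ++ [.d] ++ wpow [.a2, .b1] (2 * r + 2) ++ [.c]

theorem seg_length (r : ℕ) : (seg r).length = 8 * r + 8 := by
  simp [seg, wpow_length]; ring

theorem W_Br (r : ℕ) : snakeWord (B r) = .c := by
  have := W_in_block (r := r) (q := 0) (by omega)
  simpa [snakeBlock] using this

theorem W_Br1 (r : ℕ) : snakeWord (B r + 1) = .a1 := by
  have := W_in_block (r := r) (q := 1) (by omega)
  rw [this, snakeBlock, wpow_succ]
  rfl

theorem W_Br2 (r : ℕ) : snakeWord (B r + 2) = .b2 := by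
  have := W_in_block (r := r) (q := 2) (by omega)
  rw [this, snakeBlock, wpow_succ]
  rfl

theorem segList (r : ℕ) : Wlist (B r + 1) (8 * r + 8) = seg r := by
  have h1 : Wlist (B r) (8 * r + 8) = Wlist (B r) 1 ++ Wlist (B r + 1) (8 * r + 7) := by
    have : 8 * r + 8 = 1 + (8 * r + 7) := by omega
    rw [this, Wlist_append]
  have hW1 : Wlist (B r) 1 = [Letter.c] := by
    simp [Wlist, List.range_succ, W_Br]
  have hblock := blockList r
  rw [h1, hW1] at hblock
  have hY : Wlist (B r + 1) (8 * r + 7) =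
      wpow [.a1, .b2] (2 * r + 1) ++ ([.d] ++ wpow [.a2, .b1] (2 * r + 2)) := by
    have : snakeBlock r = [Letter.c] ++
        (wpow [.a1, .b2] (2 * r + 1) ++ ([.d] ++ wpow [.a2, .b1] (2 * r + 2))) := by
      simp [snakeBlock]
    rw [this] at hblock
    exact List.append_cancel_left hblock
  have h2 : Wlist (B r + 1) (8 * r + 8) =
      Wlist (B r + 1) (8 * r + 7) ++ Wlist (B r + 1 + (8 * r + 7)) 1 := by
    have : 8 * r + 8 = (8 * r + 7) + 1 := by omega
    rw [this, Wlist_append]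
  have harith : B r + 1 + (8 * r + 7) = B (r + 1) := by rw [B_succ]; omega
  have hW2 : Wlist (B r + 1 + (8 * r + 7)) 1 = [Letter.c] := by
    simp [Wlist, List.range_succ, harith, W_Br]
  rw [h2, hY, hW2, seg]
  simp

/-- Concatenation of segments `seg r, seg (r+1), …, seg (r+k-1)`. -/
def segs (r : ℕ) : ℕ → List Letter
  | 0 => []
  | k + 1 => seg r ++ segs (r + 1) k

theorem B_add_segs_length : ∀ (k r : ℕ), B (r + k) = B r + (segs r k).length := by
  intro k
  induction k with
  | zero => intro r; simp [segs]
  | succ k ih =>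
    intro r
    have : r + (k + 1) = (r + 1) + k := by omega
    rw [this, ih (r + 1), B_succ]
    simp [segs, seg_length]
    omega

theorem segsList : ∀ (k r : ℕ), Wlist (B r + 1) ((segs r k).length) = segs r k := by
  intro k
  induction k with
  | zero => intro r; simp [segs, Wlist]
  | succ k ih =>
    intro r
    have hlen : (segs r (k+1)).length = (8 * r + 8) + (segs (r+1) k).length := by
      simp [segs, seg_length]
    rw [hlen, Wlist_append, segList]
    have : B r + 1 + (8 * r + 8) = B (r + 1) + 1 := by rw [B_succ]; omega
    rw [this, ih (r + 1)]
    rfl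

end SnakeAux

namespace SnakeAux

section Forcing

variable {X : Type} {R : Letter → X → X → Prop} {x : X} (hs : PhiSnake R x)

/-- Reachability by some word. -/
def Reach (R : Letter → X → X → Prop) (x y : X) : Prop := ∃ u, wordRel R u x y

theorem reach_snoc {y z : X} {v : List Letter} {a : Letter}
    (h1 : Reach R x y) (h2 : wordRel R (v ++ [a]) y z) :
    ∃ u, wordRel R (u ++ [a]) x z := by
  obtain ⟨u0, hu0⟩ := h1
  refine ⟨u0 ++ v, ?_⟩
  rw [List.append_assoc]
  exact (wordRel_append _ _ _ _).2 ⟨y, hu0, h2⟩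

theorem reachC {y : X} (h : ∃ u, wordRel R (u ++ [Letter.c]) x y) : Reach R x y :=
  ⟨_, h.choose_spec⟩

include hs

/-- Forcing from a `d`-reached world: `(a₂b₁)^m c (a₁b₂)^i d` forces `i = m+1`. -/
theorem forceA {w y z : X} (hw : ∃ u, wordRel R (u ++ [Letter.d]) x w) {m i : ℕ}
    (h1 : wordRel R (wpow [.a2, .b1] m ++ [.c]) w y)
    (h2 : wordRel R (wpow [.a1, .b2] i ++ [.d]) y z) : i = m + 1 := by
  by_contra hne
  apply (hs.2.2 w hw).2
  refine ⟨z, wpow [.a2, .b1] m ++ [.c] ++ wpow [.a1, .b2] i ++ [.d], ⟨m, i, hne, rfl⟩, ?_⟩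
  have : wpow [Letter.a2, Letter.b1] m ++ [Letter.c] ++ wpow [Letter.a1, Letter.b2] i
      ++ [Letter.d] = (wpow [.a2, .b1] m ++ [.c]) ++ (wpow [.a1, .b2] i ++ [.d]) := by
    simp [List.append_assoc]
  rw [this]
  exact (wordRel_append _ _ _ _).2 ⟨y, h1, h2⟩

/-- Forcing from a `c`-reached world: `(a₁b₂)^i d (a₂b₁)^j c` forces `j = i+1`. -/
theorem forceB {y z u' : X} (hy : ∃ u, wordRel R (u ++ [Letter.c]) x y) {i j : ℕ}
    (h1 : wordRel R (wpow [.a1, .b2] i ++ [.d]) y z)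
    (h2 : wordRel R (wpow [.a2, .b1] j ++ [.c]) z u') : j = i + 1 := by
  by_contra hne
  apply (hs.2.1 y hy).2
  refine ⟨u', wpow [.a1, .b2] i ++ [.d] ++ wpow [.a2, .b1] j ++ [.c], ⟨i, j, hne, rfl⟩, ?_⟩
  have : wpow [Letter.a1, Letter.b2] i ++ [Letter.d] ++ wpow [Letter.a2, Letter.b1] j
      ++ [Letter.c] = (wpow [.a1, .b2] i ++ [.d]) ++ (wpow [.a2, .b1] j ++ [.c]) := by
    simp [List.append_assoc]
  rw [this]
  exact (wordRel_append _ _ _ _).2 ⟨z, h1, h2⟩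

omit hs

/-- A good post-`c` world for block `r`: reached from `x` by a `c`-ending word, and
preceded by a `d`-reached world `w` with `(a₂b₁)^{2r} c` from `w`. -/
def GoodC (R : Letter → X → X → Prop) (x : X) (r : ℕ) (y : X) : Prop :=
  (∃ u, wordRel R (u ++ [Letter.c]) x y) ∧
  ∃ w, (∃ u, wordRel R (u ++ [Letter.d]) x w) ∧
    wordRel R (wpow [.a2, .b1] (2 * r) ++ [.c]) w y

include hs

/-- One forced π↕ block from a good post-`c` world. -/
theorem block_step {r : ℕ} {y y' : X} (hg : GoodC R x r y) {p : List Letter}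
    (hp : p ∈ piNS) (hrel : wordRel R p y y') :
    p = seg r ∧ GoodC R x (r + 1) y' := by
  obtain ⟨i, j, rfl⟩ := hp
  have hsplit : wordRel R ((wpow [.a1, .b2] i ++ [.d]) ++ (wpow [.a2, .b1] j ++ [.c])) y y' := by
    have : wpow [Letter.a1, Letter.b2] i ++ [Letter.d] ++ wpow [Letter.a2, Letter.b1] j
        ++ [Letter.c] = (wpow [.a1, .b2] i ++ [.d]) ++ (wpow [.a2, .b1] j ++ [.c]) := by
      simp [List.append_assoc]
    rwa [this] at hrel
  obtain ⟨m, h1, h2⟩ := (wordRel_append _ _ _ _).1 hsplit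
  obtain ⟨hyreach, w, hw, hwc⟩ := hg
  have hi : i = 2 * r + 1 := forceA hs hw hwc h1
  have hj : j = i + 1 := forceB hs hyreach h1 h2
  subst hi; subst hj
  refine ⟨rfl, ?_, ?_⟩
  · exact reach_snoc (reachC hyreach) (by
      have : wpow [Letter.a1, Letter.b2] (2*r+1) ++ [Letter.d] ++ wpow [Letter.a2, Letter.b1] (2*r+1+1)
          ++ [Letter.c] = (wpow [.a1, .b2] (2*r+1) ++ [.d] ++ wpow [.a2, .b1] (2*r+1+1)) ++ [.c] := by
        simp [List.append_assoc]
      rw [← this]; exact hrel)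
  · refine ⟨m, reach_snoc (reachC hyreach) h1, ?_⟩
    have : 2 * (r + 1) = 2 * r + 1 + 1 := by omega
    rw [this]
    exact h2

/-- Iterated forced π↕ blocks. -/
theorem star_blocks : ∀ (ws : List (List Letter)), (∀ u ∈ ws, u ∈ piNS) →
    ∀ (r : ℕ) (y y2 : X), GoodC R x r y → wordRel R ws.flatten y y2 →
    GoodC R x (r + ws.length) y2 ∧ wordRel R (segs r ws.length) y y2 := by
  intro ws
  induction ws with
  | nil =>
    intro _ r y y2 hg hrel
    have : y = y2 := hrel
    subst this
    exact ⟨hg, rfl⟩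
  | cons p ws ih =>
    intro hmem r y y2 hg hrel
    rw [List.flatten_cons] at hrel
    obtain ⟨y1, h1, h2⟩ := (wordRel_append _ _ _ _).1 hrel
    obtain ⟨hpseg, hg1⟩ := block_step hs hg (hmem p (by simp)) h1
    obtain ⟨hg2, hrel2⟩ := ih (fun u hu => hmem u (by simp [hu])) (r + 1) y1 y2 hg1 h2
    subst hpseg
    refine ⟨?_, ?_⟩
    · have hlen : r + (seg r :: ws).length = (r + 1) + ws.length := by
        simp [List.length_cons]
        omega
      rw [hlen]
      exact hg2
    · show wordRel R (segs r (ws.length + 1)) y y2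
      exact (wordRel_append _ _ _ _).2 ⟨y1, h1, hrel2⟩

end Forcing

end SnakeAux

namespace SnakeAux

section Recur

variable {X : Type} {R : Letter → X → X → Prop} {x : X} (hs : PhiSnake R x)

theorem reach_trans {y z : X} {v : List Letter} (h1 : Reach R x y)
    (h2 : wordRel R v y z) : Reach R x z := by
  obtain ⟨u, hu⟩ := h1
  exact ⟨u ++ v, (wordRel_append _ _ _ _).2 ⟨y, hu, h2⟩⟩

include hs

/-- Analysis of a β-path from a good post-`c` world. -/
theorem recur_step {T : X → Prop} {r : ℕ} {y : X} (hg : GoodC R x r y)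
    {z0 : X} {w : List Tok} (hw : w ∈ beta) (hrel : tokRel R T w y z0) :
    ∃ (k : ℕ) (y2 zt z : X) (v1 v2 : List Letter),
      wordRel R (segs r k) y y2 ∧
      wordRel R v1 y2 zt ∧ T zt ∧ wordRel R v2 zt z ∧
      v1 ++ v2 = seg (r + k) ∧
      (v1.length = 2 ∨ v1.length = 8 * (r + k) + 7) ∧
      GoodC R x (r + k + 1) z := by
  obtain ⟨s, v, ⟨s', ⟨ws, hws, hflat⟩, rfl⟩, hv, rfl⟩ := hw
  obtain ⟨y2, htoks, htokv⟩ := (tokRel_append _ _ _ _).1 hrel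
  have hwrels : wordRel R s' y y2 := (tokRel_map _ _ _).1 htoks
  rw [← hflat] at hwrels
  obtain ⟨hg2, hsegs⟩ := star_blocks hs ws hws r y y2 hg hwrels
  set k := ws.length with hk
  refine ⟨k, y2, ?_⟩
  rcases hv with ⟨p, hp, rfl⟩ | ⟨i, j, rfl⟩
  · -- case 1 : a₁ b₂ t₀? π↕
    obtain ⟨i, j, rfl⟩ := hp
    obtain ⟨y3, ha1, y4, hb2, hT, htokp⟩ := htokv
    have hwp : wordRel R (wpow [.a1, .b2] i ++ [.d] ++ wpow [.a2, .b1] j ++ [.c]) y4 z0 :=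
      (tokRel_map _ _ _).1 htokp
    have hsplit : wordRel R ((wpow [.a1, .b2] i ++ [.d]) ++ (wpow [.a2, .b1] j ++ [.c])) y4 z0 := by
      have heq : wpow [Letter.a1, Letter.b2] i ++ [Letter.d] ++ wpow [Letter.a2, Letter.b1] j
          ++ [Letter.c] = (wpow [.a1, .b2] i ++ [.d]) ++ (wpow [.a2, .b1] j ++ [.c]) := by
        simp [List.append_assoc]
      rwa [heq] at hwp
    obtain ⟨mid, h1, h2⟩ := (wordRel_append _ _ _ _).1 hsplit
    have h1' : wordRel R (wpow [.a1, .b2] (i + 1) ++ [.d]) y2 mid := by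
      rw [wpow_succ]
      exact ⟨y3, ha1, y4, hb2, h1⟩
    obtain ⟨hy2c, wd, hwd, hwdc⟩ := hg2
    have hi : i + 1 = 2 * (r + k) + 1 := forceA hs hwd hwdc h1'
    have hj : j = (i + 1) + 1 := forceB hs hy2c h1' h2
    have hi' : i = 2 * (r + k) := by omega
    have hj' : j = 2 * (r + k) + 2 := by omega
    subst hi'; subst hj'
    refine ⟨y4, z0, [.a1, .b2], wpow [.a1, .b2] (2*(r+k)) ++ [.d] ++ wpow [.a2, .b1] (2*(r+k)+2) ++ [.c],
      hsegs, ⟨y3, ha1, y4, hb2, rfl⟩, hT, hwp, ?_, Or.inl rfl, ?_, mid, ?_, ?_⟩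
    · simp [seg, wpow_succ, List.append_assoc]
    · -- c-end reach of z0
      refine reach_snoc (reach_trans (reachC hy2c) h1') h2
    · exact reach_snoc (reachC hy2c) h1'
    · have : 2 * (r + k + 1) = 2 * (r + k) + 2 := by ring
      rw [this]
      exact h2
  · -- case 2 : (a₁b₂)^i d (a₂b₁)^j t₀? c
    obtain ⟨m3, hABC, hD⟩ := (tokRel_append _ _ _ _).1 htokv
    obtain ⟨m2, hAB, hC⟩ := (tokRel_append _ _ _ _).1 hABC
    obtain ⟨m1, hA, hB⟩ := (tokRel_append _ _ _ _).1 hAB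
    have hA' : wordRel R (wpow [.a1, .b2] i) y2 m1 := (tokRel_map _ _ _).1 hA
    obtain ⟨m2', hdstep0, heq⟩ := hB
    have hdstep : R Letter.d m1 m2 := by
      have h : m2' = m2 := heq
      rwa [h] at hdstep0
    have hC' : wordRel R (wpow [.a2, .b1] j) m2 m3 := (tokRel_map _ _ _).1 hC
    obtain ⟨hT, z', hcstep0, heq2⟩ := hD
    have hcstep : R Letter.c m3 z0 := by
      have h : z' = z0 := heq2
      rwa [h] at hcstep0
    have h1' : wordRel R (wpow [.a1, .b2] i ++ [.d]) y2 m2 :=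
      (wordRel_append _ _ _ _).2 ⟨m1, hA', m2, hdstep, rfl⟩
    have h2' : wordRel R (wpow [.a2, .b1] j ++ [.c]) m2 z0 :=
      (wordRel_append _ _ _ _).2 ⟨m3, hC', z0, hcstep, rfl⟩
    obtain ⟨hy2c, wd, hwd, hwdc⟩ := hg2
    have hi : i = 2 * (r + k) + 1 := forceA hs hwd hwdc h1'
    have hj : j = i + 1 := forceB hs hy2c h1' h2'
    subst hi; subst hj
    have hv1 : wordRel R (wpow [.a1, .b2] (2*(r+k)+1) ++ [.d] ++ wpow [.a2, .b1] (2*(r+k)+1+1)) y2 m3 :=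
      (wordRel_append _ _ _ _).2 ⟨m2, h1', hC'⟩
    refine ⟨m3, z0, wpow [.a1, .b2] (2*(r+k)+1) ++ [.d] ++ wpow [.a2, .b1] (2*(r+k)+1+1), [.c],
      hsegs, hv1, hT, wordRel_single.2 hcstep, ?_, Or.inr ?_, ?_, m2, ?_, ?_⟩
    · simp [seg, wpow_succ, List.append_assoc]
    · simp [wpow_length]
      omega
    · exact reach_snoc (reach_trans (reachC hy2c) h1') h2'
    · exact reach_snoc (reachC hy2c) h1'
    · have : 2 * (r + k + 1) = 2 * (r + k) + 1 + 1 := by ring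
      rw [this]
      exact h2'

end Recur

end SnakeAux

namespace SnakeAux

section Step

variable {X : Type} {R : Letter → X → X → Prop} {x : X}

/-- Extend a partial snake path by a realized word along the snake word. -/
theorem extend (σ : ℕ → X) (a n : ℕ) (z : X)
    (h : wordRel R (Wlist a n) (σ a) z) :
    ∃ σ' : ℕ → X, (∀ q ≤ a, σ' q = σ q) ∧
      (∀ p, a ≤ p → p < a + n → R (snakeWord p) (σ' p) (σ' (p + 1))) ∧
      σ' (a + n) = z := by
  obtain ⟨f, hf0, hfl, hf⟩ := wordRel_path _ _ _ h
  rw [Wlist_length] at hfl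
  refine ⟨fun q => if q ≤ a then σ q else f (q - a), fun q hq => by simp [hq], ?_, ?_⟩
  · intro p hap hlt
    have hfp : (if p ≤ a then σ p else f (p - a)) = f (p - a) := by
      rcases Nat.eq_or_lt_of_le hap with rfl | h'
      · simp [hf0]
    
      · simp [Nat.not_le.2 h']
    have hfp1 : (if p + 1 ≤ a then σ (p + 1) else f (p + 1 - a)) = f (p - a + 1) := by
      have h1 : ¬ (p + 1 ≤ a) := by omega
      have h2 : p + 1 - a = p - a + 1 := by omega
      simp [h1, h2]
    simp only [hfp, hfp1]
    have hlt' : p - a < n := by omega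
    have := hf (p - a) (by rw [Wlist_length]; exact hlt')
    rwa [Wlist_getD hlt', Nat.add_sub_cancel' hap] at this
  · rcases Nat.eq_zero_or_pos n with rfl | hn
    · have : σ a = z := h
      simp [this]
    · have h1 : ¬ (a + n ≤ a) := by omega
      simp [h1, hfl]

variable (hs : PhiSnake R x)

include hs

/-- The main extension step: from a good partial snake, extend past at least one more
block, passing a first-column world satisfying the test. -/
theorem step {P : Type} {ρ : X → Set P} {t0 : P} (hr : PhiRecur R ρ t0 x)
    (σ : ℕ → X) (r : ℕ)
    (hpath : ∀ p < B r + 1, R (snakeWord p) (σ p) (σ (p + 1)))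
    (hg : GoodC R x r (σ (B r + 1))) :
    ∃ (σ' : ℕ → X) (r' : ℕ), r < r' ∧ (∀ q ≤ B r + 1, σ' q = σ q) ∧
      (∀ p < B r' + 1, R (snakeWord p) (σ' p) (σ' (p + 1))) ∧
      GoodC R x r' (σ' (B r' + 1)) ∧
      ∃ p, B r + 1 ≤ p ∧ p < B r' + 1 ∧ t0 ∈ ρ (σ' p) ∧ FirstCol p := by
  obtain ⟨z0, w, hw, hrel⟩ := hr (σ (B r + 1)) hg.1
  obtain ⟨k, y2, zt, z, v1, v2, hsegs, hv1, hT, hv2, hcat, hlen, hgz⟩ :=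
    recur_step hs hg hw hrel
  set a := B r + 1 with ha
  set L := (segs r k).length with hL
  have haL : a + L = B (r + k) + 1 := by
    have := B_add_segs_length k r
    omega
  -- word lengths
  have hlencat : v1.length + v2.length = 8 * (r + k) + 8 := by
    have := seg_length (r + k)
    rw [← hcat] at this
    simpa using this
  -- the three Wlist identities
  have hWsegs : Wlist a L = segs r k := segsList k r
  have hWseg : Wlist (B (r + k) + 1) (v1.length + v2.length) = v1 ++ v2 := by
    rw [hlencat, segList (r + k), hcat]
  rw [Wlist_append] at hWseg
  obtain ⟨hWv1, hWv2⟩ := List.append_inj hWseg (by rw [Wlist_length])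
  -- extend three times
  obtain ⟨σ1, hag1, hp1, hend1⟩ := extend σ a L y2 (by rw [hWsegs]; exact hsegs)
  rw [haL] at hend1
  obtain ⟨σ2, hag2, hp2, hend2⟩ := extend σ1 (B (r + k) + 1) v1.length zt
    (by rw [hWv1, hend1]; exact hv1)
  obtain ⟨σ3, hag3, hp3, hend3⟩ := extend σ2 (B (r + k) + 1 + v1.length) v2.length z
    (by rw [hWv2, hend2]; exact hv2)
  set a2 := B (r + k) + 1 with ha2
  set a3 := B (r + k) + 1 + v1.length with ha3
  have haa2 : a ≤ a2 := by
    have := B_mono (Nat.le_add_right r k)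
    omega
  have haa3 : a2 ≤ a3 := by omega
  have hend : a3 + v2.length = B (r + k + 1) + 1 := by
    rw [B_succ]
    omega
  have hn2pos : 0 < v2.length := by rcases hlen with h | h <;> omega
  refine ⟨σ3, r + k + 1, by omega, ?_, ?_, ?_, a3, by omega, by omega, ?_, ?_⟩
  · intro q hq
    rw [hag3 q (by omega), hag2 q (by omega), hag1 q hq]
  · intro p hp
    rcases Nat.lt_or_ge p a with h1 | h1
    · rw [hag3 p (by omega), hag2 p (by omega), hag1 p (by omega),
        hag3 (p+1) (by omega), hag2 (p+1) (by omega), hag1 (p+1) (by omega)]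
      exact hpath p h1
    rcases Nat.lt_or_ge p a2 with h2 | h2
    · rw [hag3 p (by omega), hag2 p (by omega), hag3 (p+1) (by omega), hag2 (p+1) (by omega)]
      exact hp1 p h1 (by omega)
    rcases Nat.lt_or_ge p a3 with h3 | h3
    · rw [hag3 p (by omega), hag3 (p+1) (by omega)]
      exact hp2 p h2 (by omega)
    · exact hp3 p h3 (by omega)
  · rw [← hend, hend3]
    exact hgz
  · rw [hag3 a3 (by omega), hend2]
    exact hT
  · rcases hlen with h | h
    · refine Or.inr ⟨by omega, ?_, ?_, ?_⟩
      · have he : a3 - 3 = B (r + k) := by omega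
        rw [he, W_Br]
      · have he : a3 - 2 = B (r + k) + 1 := by omega
        rw [he, W_Br1]
      · have he : a3 - 1 = B (r + k) + 2 := by omega
        rw [he, W_Br2]
    · refine Or.inl ?_
      have he : a3 = B (r + k + 1) := by
        rw [B_succ]
        omega
      rw [he, W_Br]

/-- The base: a snake path through block 0, from condition (i) of `φ_snake`. -/
theorem base : ∃ σ0 : ℕ → X, σ0 0 = x ∧
    (∀ p < B 1 + 1, R (snakeWord p) (σ0 p) (σ0 (p + 1))) ∧
    GoodC R x 1 (σ0 (B 1 + 1)) := by
  obtain ⟨y, hy⟩ := hs.1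
  have hWl : Wlist 0 9 = [.c, .a1, .b2, .d, .a2, .b1, .a2, .b1, .c] := by decide
  have hB1 : B 1 = 8 := by norm_num [B]
  obtain ⟨σ0, hag, hp, hend⟩ := extend (fun _ => x) 0 9 y (by rw [hWl]; exact hy)
  have hsplit : wordRel R ([.c, .a1, .b2, .d] ++ [.a2, .b1, .a2, .b1, .c]) x y := hy
  obtain ⟨wd, hwd1, hwd2⟩ := (wordRel_append _ _ _ _).1 hsplit
  refine ⟨σ0, hag 0 (le_refl 0), ?_, ?_, ?_⟩
  · intro p hp'
    exact hp p (Nat.zero_le p) (by omega)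
  · refine ⟨[.c, .a1, .b2, .d, .a2, .b1, .a2, .b1], ?_⟩
    have : σ0 (B 1 + 1) = y := by rw [hB1]; exact hend
    rw [this]
    exact hy
  · refine ⟨wd, ⟨[.c, .a1, .b2], hwd1⟩, ?_⟩
    have : σ0 (B 1 + 1) = y := by rw [hB1]; exact hend
    rw [this]
    have hww : wpow [Letter.a2, Letter.b1] (2 * 1) ++ [Letter.c] = [.a2, .b1, .a2, .b1, .c] := by
      decide
    rw [hww]
    exact hwd2

end Step

end SnakeAux

open SnakeAux in
/-- If some world of a Kripke structure satisfies both `φ_snake` and `φ_recur`, then the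
structure contains a snake on which infinitely many first-column worlds satisfy `t₀`. -/
theorem snake_with_recurring_t0 {X : Type} (R : Letter → X → X → Prop)
    {P : Type} (ρ : X → Set P) (t0 : P) (x : X)
    (hs : PhiSnake R x) (hr : PhiRecur R ρ t0 x) :
    ∃ σ : ℕ → X, IsSnake R σ ∧
      {p : ℕ | t0 ∈ ρ (σ p) ∧ FirstCol p}.Infinite := by
  classical
  obtain ⟨σ0, hσ00, hσ0p, hσ0g⟩ := base hs
  -- the type of good partial snake states
  let State := {sr : (ℕ → X) × ℕ //
    (∀ p < B sr.2 + 1, R (snakeWord p) (sr.1 p) (sr.1 (p + 1))) ∧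
    GoodC R x sr.2 (sr.1 (B sr.2 + 1))}
  have hstep : ∀ s : State, ∃ s' : State, s.1.2 < s'.1.2 ∧
      (∀ q ≤ B s.1.2 + 1, s'.1.1 q = s.1.1 q) ∧
      ∃ p, B s.1.2 + 1 ≤ p ∧ p < B s'.1.2 + 1 ∧ t0 ∈ ρ (s'.1.1 p) ∧ FirstCol p := by
    rintro ⟨⟨σc, r⟩, hpath, hg⟩
    obtain ⟨σ', r', hlt, hag, hpath', hg', hp⟩ := step hs hr σc r hpath hg
    exact ⟨⟨(σ', r'), hpath', hg'⟩, hlt, hag, hp⟩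
  let F : State → State := fun s => (hstep s).choose
  let s0 : State := ⟨(σ0, 1), hσ0p, hσ0g⟩
  let seq : ℕ → State := fun n => F^[n] s0
  have hseq : ∀ n, seq (n + 1) = F (seq n) := fun n => Function.iterate_succ_apply' F n s0
  let rr : ℕ → ℕ := fun n => (seq n).1.2
  let ss : ℕ → ℕ → X := fun n => (seq n).1.1
  have hspec : ∀ n, rr n < rr (n + 1) ∧
      (∀ q ≤ B (rr n) + 1, ss (n + 1) q = ss n q) ∧
      ∃ p, B (rr n) + 1 ≤ p ∧ p < B (rr (n + 1)) + 1 ∧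
        t0 ∈ ρ (ss (n + 1) p) ∧ FirstCol p := by
    intro n
    have h := (hstep (seq n)).choose_spec
    have he : seq (n + 1) = (hstep (seq n)).choose := hseq n
    simp only [rr, ss, he]
    exact h
  choose pn hpn1 hpn2 hpn3 hpn4 using fun n => (hspec n).2.2
  have hrmono : StrictMono rr := strictMono_nat_of_lt_succ fun n => (hspec n).1
  have hrge : ∀ n, n + 1 ≤ rr n := by
    intro n
    induction n with
    | zero => exact le_refl 1
    | succ n ih => exact Nat.lt_of_le_of_lt ih (hrmono (Nat.lt_succ_self n))
  have hagree : ∀ n m, n ≤ m → ∀ q ≤ B (rr n) + 1, ss m q = ss n q := by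
    intro n m hnm
    induction m, hnm using Nat.le_induction with
    | base => intro q _; rfl
    | succ m hm ih =>
      intro q hq
      have hq' : q ≤ B (rr m) + 1 := by
        have := B_mono (hrmono.monotone hm)
        omega
      rw [(hspec m).2.1 q hq', ih q hq]
  have hpath : ∀ n, ∀ p < B (rr n) + 1, R (snakeWord p) (ss n p) (ss n (p + 1)) :=
    fun n => (seq n).2.1
  -- the limit snake
  refine ⟨fun p => ss p p, ?_, ?_⟩
  · intro p
    have hpB : p < B (rr p) + 1 := by
      have h1 := hrge p
      have h2 := B_ge (rr p)
      omega
    have hpB' : p < B (rr (p + 1)) + 1 := by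
      have := B_mono (hrmono.monotone (Nat.le_add_right p 1))
      omega
    have h := hpath (p + 1) p hpB'
    rwa [hagree p (p + 1) (Nat.le_add_right p 1) p (by omega)] at h
  · apply Set.infinite_of_injective_forall_mem (f := fun n => pn n)
    · have hm : StrictMono fun n => pn n := by
        apply strictMono_nat_of_lt_succ
        intro n
        have h1 := hpn2 n
        have h2 := hpn1 (n + 1)
        omega
      exact hm.injective
    · intro n
      have hge : n + 1 ≤ pn n := by
        have h1 := hpn1 n
        have h2 := hrge n
        have h3 := B_ge (rr n)
        omega
      have heq : ss (pn n) (pn n) = ss (n + 1) (pn n) :=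
        hagree (n + 1) (pn n) hge (pn n) (by have := hpn2 n; omega)
      refine ⟨?_, hpn4 n⟩
      show t0 ∈ ρ (ss (pn n) (pn n))
      rw [heq]
      exact hpn3 n
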